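/- Let A₁, A₂, A₃ ∈ ℂ[x,y,z] be polynomials, each a product of linear forms, with A₁ and A₂ nonconstant, such that all the occurring linear forms are pairwise non-proportional and for every nonzero P ∈ ℂ³ at most 3 of the forms vanish at P. If there exist nonzero homogeneous polynomials f, g, h ∈ ℂ[x,y,z] with A₁f³ + A₂g³ + A₃h³ = 0, then deg A₁ = deg A₂ = deg A₃ and there exist constants λ₂, λ₃ ∈ ℂ with A₁ = λ₂A₂ + λ₃A₃; that is, A₁, A₂, A₃ belong to a pencil. -/

import Mathlib

open MvPolynomial

namespace Stmt5Aux

noncomputable section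
open scoped Classical

variable {k : ℕ}

lemma degree_single (i : Fin k) : (Finsupp.single i 1 : Fin k →₀ ℕ).degree = 1 := by
  rw [Finsupp.degree_single]

/-- a polynomial homogeneous of degree 0 is a constant -/
lemma eqC_of_homog0 {p : MvPolynomial (Fin k) ℂ} (h : p.IsHomogeneous 0) :
    ∃ c : ℂ, p = C c := by
  refine ⟨coeff 0 p, ?_⟩
  ext d
  by_cases hd : d = 0
  · subst hd; simp
  · rw [h.coeff_eq_zero (by simpa [Finsupp.degree_eq_zero_iff] using hd)]
    rw [coeff_C, if_neg (by exact fun hh => hd hh.symm)]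

/-- a Finsupp with degree 1 is a single -/
lemma single_of_degree_one (d : Fin k →₀ ℕ) (h : d.degree = 1) :
    ∃ i, d = Finsupp.single i 1 := by
  classical
  have hne : d ≠ 0 := by
    intro h0; rw [h0] at h; simp [Finsupp.degree] at h
  obtain ⟨i, hi⟩ := Finsupp.ne_iff.mp hne
  simp only [Finsupp.coe_zero, Pi.zero_apply] at hi
  refine ⟨i, ?_⟩
  have hisup : i ∈ d.support := Finsupp.mem_support_iff.mpr hi
  have hle : d i ≤ d.degree := Finsupp.le_degree i d
  have hd1 : d i = 1 := le_antisymm (h ▸ hle) (Nat.one_le_iff_ne_zero.mpr hi)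
  ext j
  by_cases hj : j = i
  · subst hj; simp [hd1]
  · have hdj : d j = 0 := by
      by_contra hj0
      have : 2 ≤ d.degree := by
        have hsub : ({i, j} : Finset (Fin k)) ⊆ d.support := by
          intro x hx; simp at hx
          rcases hx with rfl | rfl
          · exact hisup
          · exact Finsupp.mem_support_iff.mpr hj0
        calc 2 = ∑ x ∈ ({i, j} : Finset (Fin k)), 1 := by
                  rw [Finset.sum_const, Finset.card_pair (fun hh => hj hh.symm)]
                  simp
          _ ≤ ∑ x ∈ ({i, j} : Finset (Fin k)), d x := by
                  apply Finset.sum_le_sum; intro x hx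
                  simp at hx; rcases hx with rfl | rfl
                  · omega
                  · exact Nat.one_le_iff_ne_zero.mpr hj0
          _ ≤ d.degree := Finset.sum_le_sum_of_subset hsub
      omega
    rw [hdj, Finsupp.single_apply, if_neg (fun hh => hj hh.symm)]

/-- representation of a linear form -/
lemma linear_rep {p : MvPolynomial (Fin k) ℂ} (h : p.IsHomogeneous 1) :
    p = ∑ i : Fin k, C (coeff (Finsupp.single i 1) p) * X i := by
  ext d
  rw [coeff_sum]
  by_cases hd : d.degree = 1
  · obtain ⟨i0, rfl⟩ := single_of_degree_one d hd
    rw [Finset.sum_eq_single i0]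
    · simp [coeff_C_mul, coeff_X']
    · intro j _ hj
      simp only [coeff_C_mul, coeff_X']
      rw [if_neg, mul_zero]
      intro hh
      exact hj ((Finsupp.single_left_inj one_ne_zero).mp hh)
    · simp
  · rw [h.coeff_eq_zero hd]
    rw [Finset.sum_eq_zero]
    intro j _
    simp only [coeff_C_mul, coeff_X']
    rw [if_neg, mul_zero]
    intro hh
    rw [← hh] at hd
    exact hd (degree_single j)


lemma totalDegree_eq_sup_degree (p : MvPolynomial (Fin k) ℂ) :
    p.totalDegree = p.support.sup fun s => Finsupp.degree s := by
  rfl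

/-- the top homogeneous component of a nonzero polynomial is nonzero -/
lemma top_component_ne_zero (p : MvPolynomial (Fin k) ℂ) (hp : p ≠ 0) :
    homogeneousComponent p.totalDegree p ≠ 0 := by
  have hsup : p.support.Nonempty := by
    rw [Finset.nonempty_iff_ne_empty]
    simpa [MvPolynomial.support_eq_empty] using hp
  obtain ⟨d, hd, hdeg⟩ := Finset.exists_mem_eq_sup p.support hsup
      (fun s => Finsupp.degree s)
  have hdeg' : d.degree = p.totalDegree := by rw [totalDegree_eq_sup_degree, hdeg]
  intro h0
  have h1 : coeff d (homogeneousComponent p.totalDegree p) = 0 := by rw [h0]; simp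
  rw [coeff_homogeneousComponent, if_pos hdeg'] at h1
  exact (mem_support_iff.mp hd) h1

/-- cofactor of a homogeneous polynomial dividing a homogeneous polynomial is homogeneous -/
lemma homog_cofactor {a b : MvPolynomial (Fin k) ℂ} {m n : ℕ}
    (ha : a.IsHomogeneous m) (ha0 : a ≠ 0) (hb0 : b ≠ 0)
    (hab : (a * b).IsHomogeneous n) : ∃ d, b.IsHomogeneous d ∧ n = m + d := by
  set D := b.totalDegree with hD
  -- decompose b into homogeneous components
  have hsum : (∑ i ∈ Finset.range (D + 1), homogeneousComponent i b) = b :=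
    sum_homogeneousComponent b
  -- key: homogeneousComponent (m+i) (a*b) = a * homogeneousComponent i b for i ≤ D
  have hcomp : ∀ i, homogeneousComponent (m + i) (a * b)
      = a * homogeneousComponent i b := by
    intro i
    have hab' : a * b = ∑ jj ∈ Finset.range (D + 1), a * homogeneousComponent jj b := by
      rw [← Finset.mul_sum, hsum]
    rw [hab', map_sum]
    rw [Finset.sum_eq_single i]
    · rw [homogeneousComponent_of_mem
        ((mem_homogeneousSubmodule _ _).mpr (ha.mul (homogeneousComponent_isHomogeneous i b)))]
      simp
    · intro jj _ hjj
      rw [homogeneousComponent_of_mem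
        ((mem_homogeneousSubmodule _ _).mpr (ha.mul (homogeneousComponent_isHomogeneous jj b)))]
      rw [if_neg (by omega)]
    · intro hi
      by_cases hiD : i ≤ D
      · exact absurd (Finset.mem_range.mpr (by omega)) hi
      · have hz : homogeneousComponent i b = 0 :=
          homogeneousComponent_eq_zero i b (show b.totalDegree < i by omega)
        rw [hz, mul_zero, map_zero]
  have htop : a * homogeneousComponent D b ≠ 0 :=
    mul_ne_zero ha0 (top_component_ne_zero b hb0)
  -- a * comp_D b is the (m+D) component of (a*b), which is homogeneous of degree n
  have h1 : n = m + D := by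
    by_contra hne
    have := hcomp D
    rw [homogeneousComponent_of_mem ((mem_homogeneousSubmodule _ _).mpr hab),
      if_neg (fun hh => hne hh.symm)] at this
    exact htop this.symm
  refine ⟨D, ?_, h1⟩
  -- every other component of b must vanish
  have hbi : ∀ i, i ≠ D → homogeneousComponent i b = 0 := by
    intro i hi
    by_contra h0
    have h2 := hcomp i
    rw [homogeneousComponent_of_mem ((mem_homogeneousSubmodule _ _).mpr hab),
      if_neg (by omega)] at h2
    exact (mul_ne_zero ha0 h0) h2.symm
  have hbD : b = homogeneousComponent D b := by
    conv_lhs => rw [← hsum]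
    rw [Finset.sum_eq_single D (fun jj _ hjj => hbi jj hjj)
      (fun hD' => absurd (Finset.mem_range.mpr (by omega)) hD')]
  rw [hbD]
  exact homogeneousComponent_isHomogeneous D b


/-- exact total degree of a product over a field -/
lemma totalDegree_mul_eq {a b : MvPolynomial (Fin k) ℂ} (ha0 : a ≠ 0) (hb0 : b ≠ 0) :
    (a * b).totalDegree = a.totalDegree + b.totalDegree := by
  refine le_antisymm (totalDegree_mul a b) ?_
  set da := a.totalDegree
  set db := b.totalDegree
  have hsum : a * b = ∑ i ∈ Finset.range (da + 1), ∑ j ∈ Finset.range (db + 1),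
      homogeneousComponent i a * homogeneousComponent j b := by
    rw [← Finset.sum_mul_sum, sum_homogeneousComponent, sum_homogeneousComponent]
  have hcomp : homogeneousComponent (da + db) (a * b)
      = homogeneousComponent da a * homogeneousComponent db b := by
    rw [hsum, map_sum]
    rw [Finset.sum_eq_single da]
    · rw [map_sum, Finset.sum_eq_single db]
      · rw [homogeneousComponent_of_mem ((mem_homogeneousSubmodule _ _).mpr
          ((homogeneousComponent_isHomogeneous da a).mul
            (homogeneousComponent_isHomogeneous db b))), if_pos rfl]
      · intro j hj hjne
        rw [homogeneousComponent_of_mem ((mem_homogeneousSubmodule _ _).mpr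
          ((homogeneousComponent_isHomogeneous da a).mul
            (homogeneousComponent_isHomogeneous j b))), if_neg (by omega)]
      · intro hdb; exact absurd (Finset.mem_range.mpr (by omega)) hdb
    · intro i hi hine
      rw [map_sum, Finset.sum_eq_zero]
      intro j hj
      rw [homogeneousComponent_of_mem ((mem_homogeneousSubmodule _ _).mpr
        ((homogeneousComponent_isHomogeneous i a).mul
          (homogeneousComponent_isHomogeneous j b))), if_neg ?_]
      have hjle : j ≤ db := by simpa [Nat.lt_succ_iff] using hj
      have hile : i ≤ da := by simpa [Nat.lt_succ_iff] using hi
      omega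
    · intro hda; exact absurd (Finset.mem_range.mpr (by omega)) hda
  have hne : homogeneousComponent (da + db) (a * b) ≠ 0 := by
    rw [hcomp]
    exact mul_ne_zero (top_component_ne_zero a ha0) (top_component_ne_zero b hb0)
  -- a nonzero homogeneous component of degree d forces totalDegree ≥ d
  obtain ⟨d, hd⟩ : ∃ d, coeff d (homogeneousComponent (da + db) (a * b)) ≠ 0 := by
    by_contra hall
    push_neg at hall
    exact hne (MvPolynomial.ext _ _ (by simpa using hall))
  rw [coeff_homogeneousComponent] at hd
  by_cases hdd : d.degree = da + db
  · have : coeff d (a * b) ≠ 0 := by rwa [if_pos hdd] at hd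
    have := le_totalDegree (p := a * b) (s := d) (mem_support_iff.mpr this)
    calc da + db = d.degree := hdd.symm
      _ = d.sum fun _ e => e := rfl
      _ ≤ (a * b).totalDegree := this
  · rw [if_neg hdd] at hd; exact absurd rfl hd

/-- a polynomial of total degree zero is a constant -/
lemma eqC_of_totalDegree0 {p : MvPolynomial (Fin k) ℂ} (h : p.totalDegree = 0) :
    ∃ c : ℂ, p = C c :=
  eqC_of_homog0 (isHomogeneous_of_totalDegree_zero (σ := Fin k) h)

/-- a nonzero linear form dividing a nonzero linear form gives a constant multiple -/
lemma linear_dvd_linear {p q : MvPolynomial (Fin k) ℂ} (hp0 : p ≠ 0) (hp : p.IsHomogeneous 1)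
    (hq0 : q ≠ 0) (hq : q.IsHomogeneous 1) (hdvd : p ∣ q) :
    ∃ c : ℂ, c ≠ 0 ∧ q = C c * p := by
  obtain ⟨u, hu⟩ := hdvd
  have hu0 : u ≠ 0 := by rintro rfl; rw [mul_zero] at hu; exact hq0 hu
  have hdeg : q.totalDegree = p.totalDegree + u.totalDegree := hu ▸ totalDegree_mul_eq hp0 hu0
  rw [hp.totalDegree hp0, hq.totalDegree hq0] at hdeg
  obtain ⟨c, rfl⟩ := eqC_of_totalDegree0 (p := u) (by omega)
  have hc : c ≠ 0 := by rintro rfl; simp at hu0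
  exact ⟨c, hc, by rw [hu]; ring⟩

/-- a nonzero linear form is prime -/
lemma linear_prime {p : MvPolynomial (Fin k) ℂ} (hp0 : p ≠ 0) (hp : p.IsHomogeneous 1) :
    Prime p := by
  rw [← UniqueFactorizationMonoid.irreducible_iff_prime]
  constructor
  · intro hunit
    obtain ⟨v, hv⟩ := hunit.exists_right_inv
    have hv0 : v ≠ 0 := by rintro rfl; rw [mul_zero] at hv; simp at hv
    have : (1 : MvPolynomial (Fin k) ℂ).totalDegree = p.totalDegree + v.totalDegree :=
      hv ▸ totalDegree_mul_eq hp0 hv0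
    rw [totalDegree_one, hp.totalDegree hp0] at this
    omega
  · intro a b hab
    have ha0 : a ≠ 0 := by rintro rfl; rw [zero_mul] at hab; exact hp0 hab
    have hb0 : b ≠ 0 := by rintro rfl; rw [mul_zero] at hab; exact hp0 hab
    have hdeg : p.totalDegree = a.totalDegree + b.totalDegree :=
      hab ▸ totalDegree_mul_eq ha0 hb0
    rw [hp.totalDegree hp0] at hdeg
    rcases Nat.eq_zero_or_pos a.totalDegree with h0 | h1
    · obtain ⟨c, rfl⟩ := eqC_of_totalDegree0 h0
      left
      have hc : c ≠ 0 := by rintro rfl; simp at ha0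
      exact IsUnit.of_mul_eq_one (C c⁻¹) (by rw [← C_mul, mul_inv_cancel₀ hc, C_1])
    · have : b.totalDegree = 0 := by omega
      obtain ⟨c, rfl⟩ := eqC_of_totalDegree0 this
      right
      have hc : c ≠ 0 := by rintro rfl; simp at hb0
      exact IsUnit.of_mul_eq_one (C c⁻¹) (by rw [← C_mul, mul_inv_cancel₀ hc, C_1])
/-- exponent comparison in a cancellative monoid with zero -/
lemma prime_pow_cancel {α : Type*} [CommRing α] [IsDomain α] {p : α} (hp : Prime p) :
    ∀ {i j : ℕ} {u v : α}, p ^ i * u = p ^ j * v → ¬ p ∣ u → ¬ p ∣ v → i = j := by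
  intro i
  induction i with
  | zero =>
    intro j u v heq hu hv
    rcases j with _ | j
    · rfl
    · exfalso
      apply hu
      rw [pow_zero, one_mul] at heq
      exact ⟨p ^ j * v, by rw [heq]; ring⟩
  | succ i ih =>
    intro j u v heq hu hv
    rcases j with _ | j
    · exfalso
      apply hv
      rw [pow_zero, one_mul] at heq
      exact ⟨p ^ i * u, by rw [← heq]; ring⟩
    · have hpe : p ≠ 0 := hp.ne_zero
      have heq' : p * (p ^ i * u) = p * (p ^ j * v) := by
        rw [show p * (p ^ i * u) = p ^ (i + 1) * u by ring,
          show p * (p ^ j * v) = p ^ (j + 1) * v by ring]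
        exact heq
      have := ih (mul_left_cancel₀ hpe heq') hu hv
      omega

/-- extracting the maximal power of a linear form from a product of linear forms -/
lemma prod_linear_extract {k : ℕ} (m : MvPolynomial (Fin k) ℂ) (hm0 : m ≠ 0)
    (hm1 : m.IsHomogeneous 1) (s : Multiset (MvPolynomial (Fin k) ℂ))
    (hs : ∀ x ∈ s, x ≠ 0 ∧ x.IsHomogeneous 1) :
    ∃ r, s.prod = m ^ (s.countP (fun x => m ∣ x)) * r ∧ ¬ m ∣ r := by
  have hmp : Prime m := linear_prime hm0 hm1
  induction s using Multiset.induction_on with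
  | empty =>
    refine ⟨1, by simp, ?_⟩
    intro hd
    exact hmp.not_unit (isUnit_of_dvd_one hd)
  | cons a s ih =>
    obtain ⟨ha0, ha1⟩ := hs a (Multiset.mem_cons_self a s)
    obtain ⟨r, hr, hnr⟩ := ih (fun x hx => hs x (Multiset.mem_cons_of_mem hx))
    by_cases hdvd : m ∣ a
    · obtain ⟨c, hc0, hc⟩ := linear_dvd_linear hm0 hm1 ha0 ha1 hdvd
      refine ⟨C c * r, ?_, ?_⟩
      · rw [Multiset.countP_cons, if_pos hdvd, Multiset.prod_cons, hr, hc]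
        ring
      · intro hd
        rcases hmp.dvd_mul.mp hd with h1 | h2
        · exact hmp.not_unit (isUnit_of_dvd_unit h1
            (IsUnit.of_mul_eq_one (C c⁻¹) (by rw [← C_mul, mul_inv_cancel₀ hc0, C_1])))
        · exact hnr h2
    · refine ⟨a * r, ?_, ?_⟩
      · rw [Multiset.countP_cons, if_neg hdvd, Multiset.prod_cons, hr]
        ring
      · intro hd
        rcases hmp.dvd_mul.mp hd with h1 | h2
        · exact hdvd h1
        · exact hnr h2

/-- contradiction lemma: a linear factor on one side only -/
lemma keyD_aux {k : ℕ} (sa sb : Multiset (MvPolynomial (Fin k) ℂ))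
    (hmem : ∀ x ∈ sa + sb, x ≠ 0 ∧ x.IsHomogeneous 1)
    (hcount : ∀ x : MvPolynomial (Fin k) ℂ, x ≠ 0 → x.IsHomogeneous 1 →
      sa.countP (fun y => x ∣ y) + sb.countP (fun y => x ∣ y) ≤ 2)
    {m : MvPolynomial (Fin k) ℂ} (hma : m ∈ sa) {F G : MvPolynomial (Fin k) ℂ}
    (hF : F ≠ 0) (hG : G ≠ 0)
    (heq : sa.prod * F ^ 3 = sb.prod * G ^ 3) (hnd : ¬ m ∣ sb.prod) : False := by
  obtain ⟨hm0, hm1⟩ := hmem m (Multiset.mem_add.mpr (Or.inl hma))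
  have hmp : Prime m := linear_prime hm0 hm1
  obtain ⟨r, hr, hnr⟩ := prod_linear_extract m hm0 hm1 sa
    (fun x hx => hmem x (Multiset.mem_add.mpr (Or.inl hx)))
  set σ := sa.countP (fun y => m ∣ y) with hσ
  have hσ1 : 1 ≤ σ := by
    rw [hσ]
    exact Multiset.countP_pos.mpr ⟨m, hma, dvd_refl m⟩
  have hσ2 : σ ≤ 2 := le_trans (Nat.le_add_right _ _) (hcount m hm0 hm1)
  obtain ⟨φ, F₀, hF₀, hFe⟩ := WfDvdMonoid.max_power_factor hF hmp.irreducible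
  obtain ⟨γ, G₀, hG₀, hGe⟩ := WfDvdMonoid.max_power_factor hG hmp.irreducible
  have key : m ^ (σ + 3 * φ) * (r * F₀ ^ 3) = m ^ (3 * γ) * (sb.prod * G₀ ^ 3) := by
    calc m ^ (σ + 3 * φ) * (r * F₀ ^ 3) = (m ^ σ * r) * (m ^ φ * F₀) ^ 3 := by ring
      _ = sa.prod * F ^ 3 := by rw [← hr, ← hFe]
      _ = sb.prod * G ^ 3 := heq
      _ = sb.prod * (m ^ γ * G₀) ^ 3 := by rw [← hGe]
      _ = m ^ (3 * γ) * (sb.prod * G₀ ^ 3) := by ring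
  have h1 : ¬ m ∣ r * F₀ ^ 3 := by
    intro hd
    rcases hmp.dvd_mul.mp hd with h | h
    · exact hnr h
    · exact hF₀ (hmp.dvd_of_dvd_pow h)
  have h2 : ¬ m ∣ sb.prod * G₀ ^ 3 := by
    intro hd
    rcases hmp.dvd_mul.mp hd with h | h
    · exact hnd h
    · exact hG₀ (hmp.dvd_of_dvd_pow h)
  have := prime_pow_cancel hmp key h1 h2
  omega

/-- key proportionality lemma for products of linear forms -/
lemma keyD {k : ℕ} : ∀ (N : ℕ) (sa sb : Multiset (MvPolynomial (Fin k) ℂ)),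
    sa.card + sb.card ≤ N →
    (∀ x ∈ sa + sb, x ≠ 0 ∧ x.IsHomogeneous 1) →
    (∀ x : MvPolynomial (Fin k) ℂ, x ≠ 0 → x.IsHomogeneous 1 →
      sa.countP (fun y => x ∣ y) + sb.countP (fun y => x ∣ y) ≤ 2) →
    ∀ F G : MvPolynomial (Fin k) ℂ, F ≠ 0 → G ≠ 0 →
    sa.prod * F ^ 3 = sb.prod * G ^ 3 →
    ∃ c : ℂ, c ≠ 0 ∧ sa.prod = C c * sb.prod := by
  intro N
  induction N with
  | zero =>
    intro sa sb hcard _ _ F G _ _ _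
    have hsa : sa = 0 := by
      rw [← Multiset.card_eq_zero]; omega
    have hsb : sb = 0 := by
      rw [← Multiset.card_eq_zero]; omega
    subst hsa; subst hsb
    exact ⟨1, one_ne_zero, by simp⟩
  | succ N ih =>
    intro sa sb hcard hmem hcount F G hF hG heq
    by_cases hsa : sa = 0
    · by_cases hsb : sb = 0
      · subst hsa; subst hsb
        exact ⟨1, one_ne_zero, by simp⟩
      · exfalso
        obtain ⟨m, hm⟩ := Multiset.exists_mem_of_ne_zero hsb
        refine keyD_aux sb sa ?_ ?_ hm hG hF heq.symm ?_
        · intro x hx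
          exact hmem x (by rw [add_comm]; exact hx)
        · intro x hx0 hx1
          have := hcount x hx0 hx1
          omega
        · rw [hsa, Multiset.prod_zero]
          intro hd
          obtain ⟨hm0, hm1⟩ := hmem m (Multiset.mem_add.mpr (Or.inr hm))
          exact (linear_prime hm0 hm1).not_unit (isUnit_of_dvd_one hd)
    · obtain ⟨m, hma⟩ := Multiset.exists_mem_of_ne_zero hsa
      obtain ⟨hm0, hm1⟩ := hmem m (Multiset.mem_add.mpr (Or.inl hma))
      have hmp : Prime m := linear_prime hm0 hm1
      by_cases hdvd : m ∣ sb.prod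
      · -- m divides an element of sb
        obtain ⟨x, hx, hmx⟩ := hmp.exists_mem_multiset_dvd hdvd
        obtain ⟨hx0, hx1⟩ := hmem x (Multiset.mem_add.mpr (Or.inr hx))
        obtain ⟨c', hc'0, hc'⟩ := linear_dvd_linear hm0 hm1 hx0 hx1 hmx
        obtain ⟨sa', rfl⟩ := Multiset.exists_cons_of_mem hma
        obtain ⟨sb', rfl⟩ := Multiset.exists_cons_of_mem hx
        obtain ⟨t, ht⟩ := IsAlgClosed.exists_pow_nat_eq c' (n := 3) (by norm_num)
        have ht0 : t ≠ 0 := by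
          rintro rfl
          rw [zero_pow (by norm_num)] at ht
          exact hc'0 ht.symm
        have heq' : sa'.prod * F ^ 3 = sb'.prod * (C t * G) ^ 3 := by
          have hc : m * (sa'.prod * F ^ 3) = m * (sb'.prod * (C t * G) ^ 3) := by
            calc m * (sa'.prod * F ^ 3) = (m ::ₘ sa').prod * F ^ 3 := by
                  rw [Multiset.prod_cons]; ring
              _ = (x ::ₘ sb').prod * G ^ 3 := heq
              _ = m * (sb'.prod * (C t * G) ^ 3) := by
                  rw [Multiset.prod_cons, hc', mul_pow, ← C_pow, ht]
                  ring
          exact mul_left_cancel₀ hm0 hc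
        obtain ⟨c, hc0, hpr⟩ := ih sa' sb' (by
            have := hcard
            simp only [Multiset.card_cons] at this
            omega)
          (fun y hy => hmem y (by
            rcases Multiset.mem_add.mp hy with h | h
            · exact Multiset.mem_add.mpr (Or.inl (Multiset.mem_cons_of_mem h))
            · exact Multiset.mem_add.mpr (Or.inr (Multiset.mem_cons_of_mem h))))
          (fun y hy0 hy1 => by
            have h1 := hcount y hy0 hy1
            have h2 : sa'.countP (fun z => y ∣ z) ≤ (m ::ₘ sa').countP (fun z => y ∣ z) :=
              Multiset.countP_le_of_le _ (Multiset.le_cons_self _ _)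
            have h3 : sb'.countP (fun z => y ∣ z) ≤ (x ::ₘ sb').countP (fun z => y ∣ z) :=
              Multiset.countP_le_of_le _ (Multiset.le_cons_self _ _)
            omega)
          F (C t * G) hF (mul_ne_zero (by
            intro hc
            exact ht0 (by
              have := congrArg (coeff 0) hc
              simpa using this)) hG) heq'
        refine ⟨c / c', div_ne_zero hc0 hc'0, ?_⟩
        have hcc : C (c / c') * C c' = (C c : MvPolynomial (Fin k) ℂ) := by
          rw [← C_mul, div_mul_cancel₀ _ hc'0]
        rw [Multiset.prod_cons, Multiset.prod_cons, hpr, hc',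
          show C (c / c') * (C c' * m * sb'.prod) = (C (c / c') * C c') * (m * sb'.prod) by ring,
          hcc]
        ring
      · exact (keyD_aux sa sb hmem hcount hma hF hG heq hdvd).elim


/-- Restriction of the polynomial ring in 3 variables to the zero locus of a linear form. -/
lemma restrict (L : MvPolynomial (Fin 3) ℂ) (hL0 : L ≠ 0) (hL1 : L.IsHomogeneous 1) :
    ∃ (Ψ : MvPolynomial (Fin 3) ℂ →ₐ[ℂ] MvPolynomial (Fin 2) ℂ)
      (ℓ : (Fin 2 → ℂ) → (Fin 3 → ℂ)),
      (∀ P, Ψ P = 0 ↔ L ∣ P) ∧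
      (∀ P q, eval q (Ψ P) = eval (ℓ q) P) ∧
      (∀ q, q ≠ 0 → ℓ q ≠ 0) ∧
      (∀ M : MvPolynomial (Fin 3) ℂ, M.IsHomogeneous 1 → (Ψ M).IsHomogeneous 1) := by
  classical
  set c : Fin 3 → ℂ := fun i => coeff (Finsupp.single i 1) L with hc
  have hex : ∃ k, c k ≠ 0 := by
    by_contra hall
    push_neg at hall
    apply hL0
    conv_lhs => rw [linear_rep hL1]
    rw [Finset.sum_eq_zero]
    intro i _
    rw [show coeff (Finsupp.single i 1) L = c i from rfl, hall i]
    simp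
  obtain ⟨k, hk⟩ := hex
  set S : MvPolynomial (Fin 2) ℂ := ∑ j : Fin 2, C (c (k.succAbove j)) * X j with hS
  set wk : MvPolynomial (Fin 2) ℂ := C (-(c k)⁻¹) * S with hwk
  set w : Fin 3 → MvPolynomial (Fin 2) ℂ := k.insertNth wk (fun j => X j) with hw
  set Ψ : MvPolynomial (Fin 3) ℂ →ₐ[ℂ] MvPolynomial (Fin 2) ℂ := aeval w with hΨ
  set τ : MvPolynomial (Fin 2) ℂ →ₐ[ℂ] MvPolynomial (Fin 3) ℂ :=
    aeval (fun j : Fin 2 => X (k.succAbove j)) with hτ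
  have hwker : w k = wk := by
    rw [hw]
    exact Fin.insertNth_apply_same (α := fun _ => MvPolynomial (Fin 2) ℂ) k wk _
  have hwsA : ∀ j, w (k.succAbove j) = X j := by
    intro j; rw [hw]
    exact Fin.insertNth_apply_succAbove (α := fun _ => MvPolynomial (Fin 2) ℂ) k wk _ j
  have hLrep : L = C (c k) * X k
      + ∑ j : Fin 2, C (c (k.succAbove j)) * X (k.succAbove j) := by
    conv_lhs => rw [linear_rep hL1]
    exact Fin.sum_univ_succAbove (fun i => C (c i) * X i) k
  have hck : (C (c k) : MvPolynomial (Fin 2) ℂ) * C (-(c k)⁻¹) = -1 := by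
    rw [← C_mul, mul_neg, mul_inv_cancel₀ hk]
    simp
  -- Ψ L = 0
  have hΨL : Ψ L = 0 := by
    calc Ψ L = C (c k) * (C (-(c k)⁻¹) * S) + S := by
          rw [hLrep, map_add, map_mul, map_sum]
          simp only [hΨ, map_mul, aeval_C, aeval_X, MvPolynomial.algebraMap_eq, hwker, hwsA,
            hwk, ← hS]
      _ = (C (c k) * C (-(c k)⁻¹)) * S + S := by ring
      _ = 0 := by rw [hck]; ring
  -- the delta argument: L divides P - τ (Ψ P)
  have hXdelta : ∀ i, L ∣ X i - τ (w i) := by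
    refine Fin.succAboveCases k ?_ ?_
    · -- the distinguished variable
      have hτwk : τ (w k) = C (-(c k)⁻¹) *
          ∑ j : Fin 2, C (c (k.succAbove j)) * X (k.succAbove j) := by
        rw [hwker, hwk, hS, map_mul, map_sum]
        simp only [hτ, map_mul, aeval_C, aeval_X, MvPolynomial.algebraMap_eq]
      have key : X k - τ (w k) = C ((c k)⁻¹) * L := by
        rw [hτwk, hLrep]
        have h1 : (C ((c k)⁻¹) : MvPolynomial (Fin 3) ℂ) * C (c k) = 1 := by
          rw [← C_mul, inv_mul_cancel₀ hk, C_1]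
        rw [mul_add, ← mul_assoc, h1, one_mul]
        rw [show (C ((c k)⁻¹) : MvPolynomial (Fin 3) ℂ) = - C (-(c k)⁻¹) by
          rw [← C_neg, neg_neg]]
        ring
      rw [key]
      exact Dvd.intro_left _ rfl
    · intro j
      rw [hwsA j]
      have : τ (X j) = X (k.succAbove j) := by rw [hτ]; exact aeval_X _ j
      rw [this, sub_self]
      exact dvd_zero L
  have hdelta : ∀ P, L ∣ P - τ (Ψ P) := by
    intro P
    induction P using MvPolynomial.induction_on with
    | C a =>
      have h1 : Ψ (C a) = C a := by rw [hΨ]; simp [MvPolynomial.algebraMap_eq]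
      rw [h1]
      have h2 : τ (C a) = C a := by rw [hτ]; simp [MvPolynomial.algebraMap_eq]
      rw [h2, sub_self]
      exact dvd_zero L
    | add p q hp hq =>
      rw [map_add, map_add,
        show p + q - (τ (Ψ p) + τ (Ψ q)) = (p - τ (Ψ p)) + (q - τ (Ψ q)) by ring]
      exact dvd_add hp hq
    | mul_X p i hp =>
      rw [map_mul, show Ψ (X i) = w i by rw [hΨ]; exact aeval_X _ i, map_mul,
        show p * X i - τ (Ψ p) * τ (w i)
          = (p - τ (Ψ p)) * X i + τ (Ψ p) * (X i - τ (w i)) by ring]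
      exact dvd_add (hp.mul_right _) ((hXdelta i).mul_left _)
  refine ⟨Ψ, fun q i => eval q (w i), ?_, ?_, ?_, ?_⟩
  · intro P
    constructor
    · intro h0
      have := hdelta P
      rwa [h0, map_zero, sub_zero] at this
    · rintro ⟨Q, rfl⟩
      rw [map_mul, hΨL, zero_mul]
  · intro P q
    induction P using MvPolynomial.induction_on with
    | C a => rw [hΨ]; simp [MvPolynomial.algebraMap_eq]
    | add p1 p2 h1 h2 => simp [map_add, h1, h2]
    | mul_X p i hp => simp [map_mul, hp, show Ψ (X i) = w i by rw [hΨ]; exact aeval_X _ i]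
  · intro q hq h0
    apply hq
    funext j
    have := congrFun h0 (k.succAbove j)
    simpa [hwsA j] using this
  · intro M hM
    have hwhom : ∀ i, (w i).IsHomogeneous 1 := by
      refine Fin.succAboveCases k ?_ ?_
      · rw [hwker, hwk]
        exact IsHomogeneous.C_mul
          (IsHomogeneous.sum _ _ _ (fun j _ => isHomogeneous_C_mul_X _ _)) _
      · intro j
        rw [hwsA j]
        exact isHomogeneous_X _ _
    conv_lhs => rw [linear_rep hM]
    rw [map_sum]
    refine IsHomogeneous.sum _ _ _ (fun i _ => ?_)
    rw [map_mul, show Ψ (C (coeff (Finsupp.single i 1) M)) = C (coeff (Finsupp.single i 1) M) by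
      rw [hΨ]; simp [MvPolynomial.algebraMap_eq],
      show Ψ (X i) = w i by rw [hΨ]; exact aeval_X _ i]
    exact (hwhom i).C_mul _

/-- a nonzero linear form in two variables has a nonzero root -/
lemma linear_root (m : MvPolynomial (Fin 2) ℂ) (hm0 : m ≠ 0) (hm1 : m.IsHomogeneous 1) :
    ∃ q : Fin 2 → ℂ, q ≠ 0 ∧ eval q m = 0 := by
  set c0 := coeff (Finsupp.single (0 : Fin 2) 1) m with hc0
  set c1 := coeff (Finsupp.single (1 : Fin 2) 1) m with hc1
  refine ⟨fun t => if t = 0 then -c1 else c0, ?_, ?_⟩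
  · intro h0
    have h1 : c0 = 0 := by simpa using congrFun h0 1
    have h2 : c1 = 0 := by simpa using congrFun h0 0
    apply hm0
    conv_lhs => rw [linear_rep hm1]
    rw [Fin.sum_univ_two, ← hc0, ← hc1, h1, h2]
    simp
  · conv_lhs => rw [linear_rep hm1]
    rw [Fin.sum_univ_two, ← hc0, ← hc1]
    simp
    ring

/-- THE CORE LEMMA: restricting the Catalan equation to one line of the arrangement. -/
lemma core {n : ℕ} (L : Fin n → MvPolynomial (Fin 3) ℂ)
    (hL0 : ∀ i, L i ≠ 0) (hL1 : ∀ i, (L i).IsHomogeneous 1)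
    (hprop : ∀ i j, i ≠ j → ∀ c : ℂ, L i ≠ C c * L j)
    (hmult : ∀ P : Fin 3 → ℂ, P ≠ 0 →
      (Finset.univ.filter fun i => MvPolynomial.eval P (L i) = 0).card ≤ 3)
    (j : Fin n) (Sa Sb : Finset (Fin n)) (hja : j ∉ Sa) (hjb : j ∉ Sb)
    (hab : Disjoint Sa Sb)
    (Cc F G g : MvPolynomial (Fin 3) ℂ) (hF : F ≠ 0) (hG : G ≠ 0) (hg : g ≠ 0)
    (hCc0 : Cc ≠ 0) (hCc : ¬ L j ∣ Cc)
    (heq : (∏ i ∈ Sa, L i) * F ^ 3 + (∏ i ∈ Sb, L i) * G ^ 3 + (L j * Cc) * g ^ 3 = 0) :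
    Sa.card = Sb.card ∧ ∃ c : ℂ, L j ∣ (∏ i ∈ Sa, L i) - C c * (∏ i ∈ Sb, L i) := by
  classical
  have hP : Prime (L j) := linear_prime (hL0 j) (hL1 j)
  obtain ⟨Ψ, ℓ, hker, heval, hl, hhom⟩ := restrict (L j) (hL0 j) (hL1 j)
  -- nonvanishing of restrictions of the other lines
  have hne : ∀ i, i ≠ j → Ψ (L i) ≠ 0 := by
    intro i hij h0
    obtain ⟨cc, _, hcc⟩ := linear_dvd_linear (hL0 j) (hL1 j) (hL0 i) (hL1 i) ((hker _).mp h0)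
    exact hprop i j hij cc hcc
  -- extract the maximal power of L j from F, G, g
  obtain ⟨φ, F₀, hF₀, hFe⟩ := WfDvdMonoid.max_power_factor hF hP.irreducible
  obtain ⟨γ, G₀, hG₀, hGe⟩ := WfDvdMonoid.max_power_factor hG hP.irreducible
  obtain ⟨vg, g₀, hg₀, hge⟩ := WfDvdMonoid.max_power_factor hg hP.irreducible
  obtain ⟨k₀, F₁, G₁, hF1, hG1, hnb⟩ :
      ∃ (k₀ : ℕ) (F₁ G₁ : MvPolynomial (Fin 3) ℂ), F = L j ^ k₀ * F₁ ∧ G = L j ^ k₀ * G₁ ∧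
        (¬ L j ∣ F₁ ∨ ¬ L j ∣ G₁) := by
    rcases le_total φ γ with hle | hle
    · refine ⟨φ, F₀, L j ^ (γ - φ) * G₀, hFe, ?_, Or.inl hF₀⟩
      rw [hGe, ← mul_assoc, ← pow_add]
      congr 2
      omega
    · refine ⟨γ, L j ^ (φ - γ) * F₀, G₀, ?_, hGe, Or.inr hG₀⟩
      rw [hFe, ← mul_assoc, ← pow_add]
      congr 2
      omega
  set U : MvPolynomial (Fin 3) ℂ := (∏ i ∈ Sa, L i) * F₁ ^ 3 + (∏ i ∈ Sb, L i) * G₁ ^ 3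
    with hU
  have hg0' : g₀ ≠ 0 := fun h => hg₀ (h ▸ dvd_zero _)
  have hW0 : (-(Cc * g₀ ^ 3) : MvPolynomial (Fin 3) ℂ) ≠ 0 :=
    neg_ne_zero.mpr (mul_ne_zero hCc0 (pow_ne_zero _ hg0'))
  have hWnd : ¬ L j ∣ -(Cc * g₀ ^ 3) := by
    rw [dvd_neg]
    intro hd
    rcases hP.dvd_mul.mp hd with h | h
    · exact hCc h
    · exact hg₀ (hP.dvd_of_dvd_pow h)
  have hkey : L j ^ (3 * k₀) * U = L j ^ (1 + 3 * vg) * (-(Cc * g₀ ^ 3)) := by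
    have e1 : L j ^ (3 * k₀) * U = (∏ i ∈ Sa, L i) * F ^ 3 + (∏ i ∈ Sb, L i) * G ^ 3 := by
      rw [hU, hF1, hG1]
      ring
    have e2 : L j ^ (1 + 3 * vg) * (-(Cc * g₀ ^ 3)) = -((L j * Cc) * g ^ 3) := by
      rw [hge]
      ring
    rw [e1, e2]
    linear_combination heq
  have hU0 : U ≠ 0 := by
    intro h0
    rw [h0, mul_zero] at hkey
    exact (mul_ne_zero (pow_ne_zero _ hP.ne_zero) hW0) hkey.symm
  have hPU : L j ∣ U := by
    by_contra hnd
    have := prime_pow_cancel hP hkey hnd hWnd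
    omega
  have hΨU : Ψ ((∏ i ∈ Sa, L i)) * (Ψ F₁) ^ 3 + Ψ ((∏ i ∈ Sb, L i)) * (Ψ G₁) ^ 3 = 0 := by
    have := (hker U).mpr hPU
    rw [hU, map_add, map_mul, map_mul, map_pow, map_pow] at this
    exact this
  have hNa : Ψ (∏ i ∈ Sa, L i) ≠ 0 := by
    intro h0
    obtain ⟨i, hi, hdvd⟩ := hP.exists_mem_finset_dvd ((hker _).mp h0)
    obtain ⟨cc, _, hcc⟩ := linear_dvd_linear (hL0 j) (hL1 j) (hL0 i) (hL1 i) hdvd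
    exact hprop i j (by rintro rfl; exact hja hi) cc hcc
  have hNb : Ψ (∏ i ∈ Sb, L i) ≠ 0 := by
    intro h0
    obtain ⟨i, hi, hdvd⟩ := hP.exists_mem_finset_dvd ((hker _).mp h0)
    obtain ⟨cc, _, hcc⟩ := linear_dvd_linear (hL0 j) (hL1 j) (hL0 i) (hL1 i) hdvd
    exact hprop i j (by rintro rfl; exact hjb hi) cc hcc
  have hbothF : Ψ F₁ ≠ 0 ∧ Ψ G₁ ≠ 0 := by
    rcases hnb with hndF | hndG
    · have h1 : Ψ F₁ ≠ 0 := fun h0 => hndF ((hker _).mp h0)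
      refine ⟨h1, fun h0 => ?_⟩
      rw [h0] at hΨU
      have h2 : Ψ (∏ i ∈ Sa, L i) * Ψ F₁ ^ 3 = 0 := by linear_combination hΨU
      exact (mul_ne_zero hNa (pow_ne_zero 3 h1)) h2
    · have h1 : Ψ G₁ ≠ 0 := fun h0 => hndG ((hker _).mp h0)
      refine ⟨fun h0 => ?_, h1⟩
      rw [h0] at hΨU
      have h2 : Ψ (∏ i ∈ Sb, L i) * Ψ G₁ ^ 3 = 0 := by linear_combination hΨU
      exact (mul_ne_zero hNb (pow_ne_zero 3 h1)) h2
  obtain ⟨hΨF, hΨG⟩ := hbothF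
  -- set up the multisets for keyD
  set sa : Multiset (MvPolynomial (Fin 2) ℂ) := Sa.val.map (fun i => Ψ (L i)) with hsa
  set sb : Multiset (MvPolynomial (Fin 2) ℂ) := Sb.val.map (fun i => Ψ (L i)) with hsb
  have hsaprod : sa.prod = Ψ (∏ i ∈ Sa, L i) := by
    rw [map_prod, hsa, Finset.prod_eq_multiset_prod]
  have hsbprod : sb.prod = Ψ (∏ i ∈ Sb, L i) := by
    rw [map_prod, hsb, Finset.prod_eq_multiset_prod]
  have hmem : ∀ x ∈ sa + sb, x ≠ 0 ∧ x.IsHomogeneous 1 := by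
    intro x hx
    have : ∃ i, i ≠ j ∧ Ψ (L i) = x := by
      rcases Multiset.mem_add.mp hx with h | h
      · obtain ⟨i, hi, rfl⟩ := Multiset.mem_map.mp h
        exact ⟨i, by rintro rfl; exact hja hi, rfl⟩
      · obtain ⟨i, hi, rfl⟩ := Multiset.mem_map.mp h
        exact ⟨i, by rintro rfl; exact hjb hi, rfl⟩
    obtain ⟨i, hij, rfl⟩ := this
    exact ⟨hne i hij, hhom _ (hL1 i)⟩
  have hcount : ∀ x : MvPolynomial (Fin 2) ℂ, x ≠ 0 → x.IsHomogeneous 1 →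
      sa.countP (fun y => x ∣ y) + sb.countP (fun y => x ∣ y) ≤ 2 := by
    intro x hx0 hx1
    obtain ⟨q, hq0, hqz⟩ := linear_root x hx0 hx1
    set pt := ℓ q with hpt
    have hpt0 : pt ≠ 0 := hl q hq0
    have hvan : ∀ i, x ∣ Ψ (L i) → eval pt (L i) = 0 := by
      intro i hd
      obtain ⟨r, hr⟩ := hd
      rw [← heval (L i) q, hr, map_mul, hqz, zero_mul]
    have hvanj : eval pt (L j) = 0 := by
      have h0 : Ψ (L j) = 0 := (hker _).mpr dvd_rfl
      rw [← heval (L j) q, h0, map_zero]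
    set Fa := Sa.filter (fun i => x ∣ Ψ (L i)) with hFa
    set Fb := Sb.filter (fun i => x ∣ Ψ (L i)) with hFb
    have hca : sa.countP (fun y => x ∣ y) = Fa.card := by
      rw [hsa, Multiset.countP_map, hFa, Finset.card_def, Finset.filter_val]
    have hcb : sb.countP (fun y => x ∣ y) = Fb.card := by
      rw [hsb, Multiset.countP_map, hFb, Finset.card_def, Finset.filter_val]
    have hsub : Fa ∪ Fb ∪ {j} ⊆ Finset.univ.filter (fun i => eval pt (L i) = 0) := by
      intro i hi
      simp only [Finset.mem_union, Finset.mem_singleton] at hi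
      rw [Finset.mem_filter]
      refine ⟨Finset.mem_univ i, ?_⟩
      rcases hi with (hi | hi) | rfl
      · exact hvan i (Finset.mem_filter.mp hi).2
      · exact hvan i (Finset.mem_filter.mp hi).2
      · exact hvanj
    have hdisj1 : Disjoint Fa Fb :=
      Finset.disjoint_of_subset_left (Finset.filter_subset _ _)
        (Finset.disjoint_of_subset_right (Finset.filter_subset _ _) hab)
    have hjnotin : j ∉ Fa ∪ Fb := by
      rw [Finset.mem_union]
      rintro (hi | hi)
      · exact hja (Finset.mem_of_mem_filter _ hi)
      · exact hjb (Finset.mem_of_mem_filter _ hi)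
    have hcard : (Fa ∪ Fb ∪ {j}).card = Fa.card + Fb.card + 1 := by
      rw [Finset.card_union_of_disjoint (by
        rw [Finset.disjoint_singleton_right]; exact hjnotin),
        Finset.card_union_of_disjoint hdisj1, Finset.card_singleton]
    have hle3 := hmult pt hpt0
    have := Finset.card_le_card hsub
    rw [hcard] at this
    omega
  obtain ⟨c, hc0, hprod⟩ := keyD (sa.card + sb.card) sa sb le_rfl hmem hcount
    (Ψ F₁) (- Ψ G₁) hΨF (neg_ne_zero.mpr hΨG) (by
      rw [hsaprod, hsbprod]
      linear_combination hΨU)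
  have hΨC : Ψ (C c) = C c := by
    have := Ψ.commutes c
    rwa [MvPolynomial.algebraMap_eq, MvPolynomial.algebraMap_eq] at this
  constructor
  · -- equality of cardinalities via homogeneity degrees
    have hhoma : (Ψ (∏ i ∈ Sa, L i)).IsHomogeneous Sa.card := by
      rw [map_prod]
      have := IsHomogeneous.prod Sa (fun i => Ψ (L i)) (fun _ => 1)
        (fun i _ => hhom _ (hL1 i))
      simpa using this
    have hhomb : (Ψ (∏ i ∈ Sb, L i)).IsHomogeneous Sb.card := by
      rw [map_prod]
      have := IsHomogeneous.prod Sb (fun i => Ψ (L i)) (fun _ => 1)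
        (fun i _ => hhom _ (hL1 i))
      simpa using this
    have hprod' : Ψ (∏ i ∈ Sa, L i) = C c * Ψ (∏ i ∈ Sb, L i) := by
      rw [← hsaprod, ← hsbprod]; exact hprod
    exact IsHomogeneous.inj_right hhoma (hprod' ▸ hhomb.C_mul c) hNa
  · refine ⟨c, (hker _).mp ?_⟩
    rw [map_sub, map_mul, hΨC, ← hsaprod, ← hsbprod, hprod]
    ring

end
end Stmt5Aux

open Stmt5Aux in
/-- if the Catalan equation `A₁f³ + A₂g³ + A₃h³ = 0` with `A₁, A₂` nonconstant
products of pairwise non-proportional linear forms (the arrangement having only points of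
multiplicity 2 and 3) has a solution in nonzero homogeneous polynomials, then the three
coefficients have the same degree and belong to a pencil: `A₁ = λ₂A₂ + λ₃A₃`. -/
theorem stmt5
    (n : ℕ) (L : Fin n → MvPolynomial (Fin 3) ℂ)
    (hL0 : ∀ i, L i ≠ 0)
    (hL1 : ∀ i, (L i).IsHomogeneous 1)
    (hprop : ∀ i j, i ≠ j → ∀ c : ℂ, L i ≠ C c * L j)
    (hmult : ∀ P : Fin 3 → ℂ, P ≠ 0 →
      (Finset.univ.filter fun i => MvPolynomial.eval P (L i) = 0).card ≤ 3)
    (S : Fin 3 → Finset (Fin n))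
    (hdisj : ∀ i j, i ≠ j → Disjoint (S i) (S j))
    (hcover : S 0 ∪ S 1 ∪ S 2 = Finset.univ)
    (A : Fin 3 → MvPolynomial (Fin 3) ℂ)
    (hA : ∀ i, A i = ∏ j ∈ S i, L j)
    (hA1nc : ∀ c : ℂ, A 0 ≠ C c)
    (hA2nc : ∀ c : ℂ, A 1 ≠ C c)
    (f g h : MvPolynomial (Fin 3) ℂ)
    (hf : f ≠ 0) (hg : g ≠ 0) (hh : h ≠ 0)
    (hfhom : ∃ d, f.IsHomogeneous d)
    (hghom : ∃ d, g.IsHomogeneous d)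
    (hhhom : ∃ d, h.IsHomogeneous d)
    (heq : A 0 * f ^ 3 + A 1 * g ^ 3 + A 2 * h ^ 3 = 0) :
    (A 0).totalDegree = (A 1).totalDegree ∧
    (A 1).totalDegree = (A 2).totalDegree ∧
    ∃ lam2 lam3 : ℂ, A 0 = C lam2 * A 1 + C lam3 * A 2 := by
  classical
  have hAne : ∀ i, A i ≠ 0 := by
    intro i
    rw [hA i]
    exact Finset.prod_ne_zero_iff.mpr (fun x _ => hL0 x)
  have hAhom : ∀ i : Fin 3, (A i).IsHomogeneous (S i).card := by
    intro i
    rw [hA i]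
    have := IsHomogeneous.prod (S i) L (fun _ => 1) (fun x _ => hL1 x)
    simpa using this
  have hS0ne : (S 0).Nonempty := by
    rw [Finset.nonempty_iff_ne_empty]
    intro h0
    apply hA1nc 1
    rw [hA 0, h0]
    simp
  have hS1ne : (S 1).Nonempty := by
    rw [Finset.nonempty_iff_ne_empty]
    intro h0
    apply hA2nc 1
    rw [hA 1, h0]
    simp
  -- generic fact: L j does not divide a product of lines avoiding j
  have hnodvd : ∀ (j : Fin n) (s : Finset (Fin n)), j ∉ s → ¬ L j ∣ ∏ i ∈ s, L i := by
    intro j s hjs hd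
    obtain ⟨i, hi, hdvd⟩ := (linear_prime (hL0 j) (hL1 j)).exists_mem_finset_dvd hd
    obtain ⟨cx, _, hcx⟩ := linear_dvd_linear (hL0 j) (hL1 j) (hL0 i) (hL1 i) hdvd
    exact hprop i j (by rintro rfl; exact hjs hi) cx hcx
  -- apply CORE to each line of S 1
  have core1 : ∀ j ∈ S 1, (S 0).card = (S 2).card ∧
      ∃ c : ℂ, L j ∣ A 0 - C c * A 2 := by
    intro j hj
    have hj0 : j ∉ S 0 := Finset.disjoint_right.mp (hdisj 0 1 (by decide)) hj
    have hj2 : j ∉ S 2 := Finset.disjoint_left.mp (hdisj 1 2 (by decide)) hj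
    have hje : j ∉ (S 1).erase j := Finset.notMem_erase j _
    have hres := core L hL0 hL1 hprop hmult j (S 0) (S 2) hj0 hj2
      (hdisj 0 2 (by decide)) (∏ i ∈ (S 1).erase j, L i) f h g hf hh hg
      (Finset.prod_ne_zero_iff.mpr (fun x _ => hL0 x)) (hnodvd j _ hje) (by
        have hA1f : A 1 = L j * ∏ i ∈ (S 1).erase j, L i := by
          rw [hA 1, Finset.mul_prod_erase _ _ hj]
        rw [← hA 0, ← hA 2, ← hA1f]
        linear_combination heq)
    obtain ⟨hcard, c, hc⟩ := hres
    rw [← hA 0, ← hA 2] at hc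
    exact ⟨hcard, c, hc⟩
  -- apply CORE to one line of S 0
  have core2 : (S 1).card = (S 2).card := by
    obtain ⟨j0, hj0⟩ := hS0ne
    have hj1 : j0 ∉ S 1 := Finset.disjoint_left.mp (hdisj 0 1 (by decide)) hj0
    have hj2 : j0 ∉ S 2 := Finset.disjoint_left.mp (hdisj 0 2 (by decide)) hj0
    have hje : j0 ∉ (S 0).erase j0 := Finset.notMem_erase j0 _
    have hres := core L hL0 hL1 hprop hmult j0 (S 1) (S 2) hj1 hj2
      (hdisj 1 2 (by decide)) (∏ i ∈ (S 0).erase j0, L i) g h f hg hh hf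
      (Finset.prod_ne_zero_iff.mpr (fun x _ => hL0 x)) (hnodvd j0 _ hje) (by
        have hA0f : A 0 = L j0 * ∏ i ∈ (S 0).erase j0, L i := by
          rw [hA 0, Finset.mul_prod_erase _ _ hj0]
        rw [← hA 1, ← hA 2, ← hA0f]
        linear_combination heq)
    exact hres.1
  obtain ⟨jst, hjst⟩ := hS1ne
  have core1' := core1 jst hjst
  have hc02 : (S 0).card = (S 2).card := core1'.1
  have hdeg : ∀ i, (A i).totalDegree = (S i).card := fun i => (hAhom i).totalDegree (hAne i)
  -- choose the constant from the distinguished line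
  set cst : ℂ := core1'.2.choose with hcst
  have hcstspec : L jst ∣ A 0 - C cst * A 2 := core1'.2.choose_spec
  -- all lines of S 1 divide A 0 - C cst * A 2
  have hconst : ∀ j ∈ S 1, L j ∣ A 0 - C cst * A 2 := by
    intro j hj
    by_cases hjj : j = jst
    · subst hjj; exact hcstspec
    · obtain ⟨cj, hcj⟩ := (core1 j hj).2
      suffices hcc : cj = cst by rwa [hcc] at hcj
      -- find a common zero of L j and L jst
      obtain ⟨Ψ, ℓ, hker, heval, hl, hhom⟩ := restrict (L j) (hL0 j) (hL1 j)
      have hΨst : Ψ (L jst) ≠ 0 := by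
        intro h0
        obtain ⟨cx, _, hcx⟩ :=
          linear_dvd_linear (hL0 j) (hL1 j) (hL0 jst) (hL1 jst) ((hker _).mp h0)
        exact hprop jst j (fun hh2 => hjj hh2.symm) cx hcx
      obtain ⟨q, hq0, hqz⟩ := linear_root _ hΨst (hhom _ (hL1 jst))
      set pt := ℓ q with hpt
      have hpt0 : pt ≠ 0 := hl q hq0
      have hptj : eval pt (L j) = 0 := by
        have h0 : Ψ (L j) = 0 := (hker _).mpr dvd_rfl
        rw [← heval (L j) q, h0, map_zero]
      have hptst : eval pt (L jst) = 0 := by rw [← heval (L jst) q, hqz]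
      have hE1 : eval pt (A 0) - cj * eval pt (A 2) = 0 := by
        obtain ⟨r, hr⟩ := hcj
        have := congrArg (eval pt) hr
        rw [map_sub, map_mul, map_mul, eval_C, hptj, zero_mul] at this
        exact this
      have hE2 : eval pt (A 0) - cst * eval pt (A 2) = 0 := by
        obtain ⟨r, hr⟩ := hcstspec
        have := congrArg (eval pt) hr
        rw [map_sub, map_mul, map_mul, eval_C, hptst, zero_mul] at this
        exact this
      by_cases hA2pt : eval pt (A 2) = 0
      · exfalso
        have hA0pt : eval pt (A 0) = 0 := by
          rw [hA2pt, mul_zero, sub_zero] at hE1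
          exact hE1
        have hex0 : ∃ i0 ∈ S 0, eval pt (L i0) = 0 := by
          rw [hA 0, map_prod] at hA0pt
          exact Finset.prod_eq_zero_iff.mp hA0pt
        have hex2 : ∃ i2 ∈ S 2, eval pt (L i2) = 0 := by
          rw [hA 2, map_prod] at hA2pt
          exact Finset.prod_eq_zero_iff.mp hA2pt
        obtain ⟨i0, hi0, hi0z⟩ := hex0
        obtain ⟨i2, hi2, hi2z⟩ := hex2
        -- four distinct lines through pt
        have hji0 : j ≠ i0 := by
          rintro rfl; exact (Finset.disjoint_right.mp (hdisj 0 1 (by decide)) hj) hi0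
        have hji2 : j ≠ i2 := by
          rintro rfl; exact (Finset.disjoint_left.mp (hdisj 1 2 (by decide)) hj) hi2
        have hsti0 : jst ≠ i0 := by
          rintro rfl; exact (Finset.disjoint_right.mp (hdisj 0 1 (by decide)) hjst) hi0
        have hsti2 : jst ≠ i2 := by
          rintro rfl; exact (Finset.disjoint_left.mp (hdisj 1 2 (by decide)) hjst) hi2
        have hi02 : i0 ≠ i2 := by
          rintro rfl; exact (Finset.disjoint_left.mp (hdisj 0 2 (by decide)) hi0) hi2
        have hsubT : (insert j (insert jst (insert i0 ({i2} : Finset (Fin n)))))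
            ⊆ Finset.univ.filter (fun i => eval pt (L i) = 0) := by
          intro x hx
          rw [Finset.mem_filter]
          refine ⟨Finset.mem_univ x, ?_⟩
          simp only [Finset.mem_insert, Finset.mem_singleton] at hx
          rcases hx with rfl | rfl | rfl | rfl
          · exact hptj
          · exact hptst
          · exact hi0z
          · exact hi2z
        have hcardT : (insert j (insert jst (insert i0 ({i2} : Finset (Fin n))))).card = 4 := by
          rw [Finset.card_insert_of_notMem (by
            simp only [Finset.mem_insert, Finset.mem_singleton]
            push_neg
            exact ⟨hjj, hji0, hji2⟩)]
          rw [Finset.card_insert_of_notMem (by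
            simp only [Finset.mem_insert, Finset.mem_singleton]
            push_neg
            exact ⟨hsti0, hsti2⟩)]
          rw [Finset.card_insert_of_notMem (by
            simp only [Finset.mem_singleton]
            exact hi02)]
          rw [Finset.card_singleton]
        have hle := hmult pt hpt0
        have := Finset.card_le_card hsubT
        rw [hcardT] at this
        omega
      · have hz : (cj - cst) * eval pt (A 2) = 0 := by linear_combination hE2 - hE1
        rcases mul_eq_zero.mp hz with hz1 | hz2
        · exact sub_eq_zero.mp hz1
        · exact absurd hz2 hA2pt
  -- the product of all lines of S 1 divides A 0 - C cst * A 2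
  have hproddvd : ∀ s : Finset (Fin n), s ⊆ S 1 → (∏ i ∈ s, L i) ∣ A 0 - C cst * A 2 := by
    intro s
    induction s using Finset.cons_induction with
    | empty => intro _; simp
    | cons a s ha ih =>
      intro hsub
      have hasub : a ∈ S 1 := hsub (Finset.mem_cons_self a s)
      have hs' : s ⊆ S 1 := fun x hx => hsub (Finset.mem_cons.mpr (Or.inr hx))
      obtain ⟨M, hM⟩ := ih hs'
      have haN : L a ∣ A 0 - C cst * A 2 := hconst a hasub
      have hLaM : L a ∣ M := by
        rw [hM] at haN
        rcases (linear_prime (hL0 a) (hL1 a)).dvd_mul.mp haN with hcase | hcase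
        · exact absurd hcase (hnodvd a s ha)
        · exact hcase
      obtain ⟨M', rfl⟩ := hLaM
      exact ⟨M', by rw [hM, Finset.prod_cons]; ring⟩
  have hA1dvd : A 1 ∣ A 0 - C cst * A 2 := by
    rw [hA 1]
    exact hproddvd (S 1) (Finset.Subset.refl _)
  refine ⟨?_, ?_, ?_⟩
  · rw [hdeg 0, hdeg 1]
    omega
  · rw [hdeg 1, hdeg 2]
    omega
  · by_cases hN0 : A 0 - C cst * A 2 = 0
    · exact ⟨0, cst, by rw [map_zero, zero_mul, zero_add]; exact sub_eq_zero.mp hN0⟩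
    · obtain ⟨R, hR⟩ := hA1dvd
      have hR0 : R ≠ 0 := by rintro rfl; rw [mul_zero] at hR; exact hN0 hR
      have h2' : (C cst * A 2).IsHomogeneous (S 0).card := by
        rw [hc02]; exact (hAhom 2).C_mul cst
      have hNhom : (A 0 - C cst * A 2).IsHomogeneous (S 0).card := (hAhom 0).sub h2'
      have hdegN : (A 0 - C cst * A 2).totalDegree = (S 0).card := hNhom.totalDegree hN0
      have hdegprod : (A 0 - C cst * A 2).totalDegree
          = (A 1).totalDegree + R.totalDegree := hR ▸ totalDegree_mul_eq (hAne 1) hR0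
      have hRdeg : R.totalDegree = 0 := by
        rw [hdegN, hdeg 1] at hdegprod
        omega
      obtain ⟨lam, rfl⟩ := eqC_of_totalDegree0 hRdeg
      exact ⟨lam, cst, by linear_combination hR⟩
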